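/- The Demazure operators satisfy the braid relation ∂_i ∂_{i+1} ∂_i = ∂_{i+1} ∂_i ∂_{i+1} as operators on R = k[x_1,...,x_n]. -/

import Mathlib

open MvPolynomial

variable {k : Type*} [CommRing k] {n : ℕ}

/-- Substituting `X a` for `X b`. -/
noncomputable def collapse (a b : Fin n) :
    MvPolynomial (Fin n) k →ₐ[k] MvPolynomial (Fin n) k :=
  aeval (fun m => if m = b then X a else X m)

theorem eval_aux (a b : Fin n) (f : MvPolynomial (Fin n) k) :
    (X b - X a : MvPolynomial (Fin n) k) ∣ f - collapse a b f := by
  classical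
  let g : Fin n → Polynomial (MvPolynomial (Fin n) k) :=
    fun m => if m = b then Polynomial.X else Polynomial.C (X m)
  let q : Polynomial (MvPolynomial (Fin n) k) := aeval g f
  have key : ∀ c : MvPolynomial (Fin n) k, Polynomial.eval c q =
      aeval (fun m => if m = b then c else X m) f := by
    intro c
    have h1 := congrArg (fun ψ : MvPolynomial (Fin n) k →ₐ[k] MvPolynomial (Fin n) k => ψ f)
      (comp_aeval (f := g)
        ((Polynomial.aeval c : Polynomial (MvPolynomial (Fin n) k)
            →ₐ[MvPolynomial (Fin n) k] MvPolynomial (Fin n) k).restrictScalars k))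
    simp only [AlgHom.coe_comp, Function.comp_apply, AlgHom.coe_restrictScalars'] at h1
    have h2 : (fun m => (Polynomial.aeval c (g m) : MvPolynomial (Fin n) k))
        = fun m => if m = b then c else X m := by
      funext m
      by_cases h : m = b <;> simp [g, h]
    have h3 : Polynomial.eval c q = Polynomial.aeval c (aeval g f) := by
      rw [Polynomial.coe_aeval_eq_eval]
    rw [h3]
    rw [h1, h2]
  have h1 : Polynomial.eval (X b : MvPolynomial (Fin n) k) q = f := by
    rw [key]
    have : (fun m => if m = b then (X b : MvPolynomial (Fin n) k) else X m) = X := by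
      funext m; by_cases h : m = b <;> simp [h]
    rw [this, aeval_X_left_apply]
  have h2 : Polynomial.eval (X a : MvPolynomial (Fin n) k) q = collapse a b f := by
    rw [key]; rfl
  calc (X b - X a : MvPolynomial (Fin n) k) ∣ q.eval (X b) - q.eval (X a) :=
        Polynomial.sub_dvd_eval_sub _ _ q
    _ = f - collapse a b f := by rw [h1, h2]

theorem collapse_rename (a b : Fin n) (f : MvPolynomial (Fin n) k) :
    collapse a b (rename (Equiv.swap a b) f) = collapse a b f := by
  classical
  have hfun : ((fun m => if m = b then (X a : MvPolynomial (Fin n) k) else X m)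
      ∘ (Equiv.swap a b)) = fun m => if m = b then X a else X m := by
    funext m
    rcases eq_or_ne m a with rfl | hma
    · by_cases h : m = b
      · subst h; simp
      · simp [Function.comp, Equiv.swap_apply_left, h]
    · rcases eq_or_ne m b with rfl | hmb
      · simp [Function.comp, Equiv.swap_apply_right, hma.symm]
      · simp [Function.comp, Equiv.swap_apply_of_ne_of_ne hma hmb, hmb]
  rw [collapse, aeval_rename, hfun]

theorem demazure_dvd (a b : Fin n) (f : MvPolynomial (Fin n) k) :
    (X b - X a : MvPolynomial (Fin n) k) ∣ f - rename (Equiv.swap a b) f := by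
  have h1 := eval_aux a b f
  have h2 := eval_aux a b (rename (Equiv.swap a b) f)
  rw [collapse_rename] at h2
  have h3 : f - rename (Equiv.swap a b) f =
      (f - collapse a b f) - (rename (Equiv.swap a b) f - collapse a b f) := by ring
  rw [h3]
  exact dvd_sub h1 h2

/-- The Demazure operator `∂` associated to the transposition of the variables
`x_a` and `x_b`: it sends `f` to `(f - s(f))/(x_b - x_a)`, where `s` is the
algebra automorphism swapping the variables `x_a` and `x_b`. -/
noncomputable def demazure (a b : Fin n) (f : MvPolynomial (Fin n) k) :
    MvPolynomial (Fin n) k :=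
  (demazure_dvd a b f).choose

/-- The defining property of the Demazure operator: `f - s(f) = (x_b - x_a) * ∂(f)`. -/
theorem demazure_spec (a b : Fin n) (f : MvPolynomial (Fin n) k) :
    f - rename (Equiv.swap a b) f = (X b - X a) * demazure a b f :=
  (demazure_dvd a b f).choose_spec

private lemma X_mul_regular' {s : Fin n} {g : MvPolynomial (Fin n) k}
    (h : X s * g = 0) : g = 0 := by
  ext m
  have h2 := congrArg (coeff (Finsupp.single s 1 + m)) h
  simpa [coeff_X_mul] using h2

private lemma X_sub_X_regular {a b : Fin n} (hab : a ≠ b)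
    {g : MvPolynomial (Fin n) k} (h : (X b - X a) * g = 0) : g = 0 := by
  classical
  let φ : MvPolynomial (Fin n) k →ₐ[k] MvPolynomial (Fin n) k :=
    aeval (fun m => if m = b then X b + X a else X m)
  let ψ : MvPolynomial (Fin n) k →ₐ[k] MvPolynomial (Fin n) k :=
    aeval (fun m => if m = b then X b - X a else X m)
  have hcomp : ∀ p, ψ (φ p) = p := by
    intro p
    have hcc : ψ.comp φ = AlgHom.id k (MvPolynomial (Fin n) k) := by
      apply algHom_ext
      intro m
      by_cases hm : m = b
      · subst hm
        show ψ (φ (X m)) = X m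
        have hf : φ (X m) = X m + X a := by simp [φ]
        have hg1 : ψ (X m) = X m - X a := by simp [ψ]
        have hg2 : ψ (X a) = X a := by simp [ψ, hab]
        rw [hf, map_add, hg1, hg2]
        ring
      · simp [φ, ψ, hm]
    calc ψ (φ p) = (ψ.comp φ) p := rfl
      _ = p := by rw [hcc]; rfl
  have h2 : φ ((X b - X a) * g) = 0 := by rw [h, map_zero]
  rw [map_mul, map_sub] at h2
  have hXb : φ (X b) = X b + X a := by simp [φ]
  have hXa : φ (X a) = X a := by simp [φ, hab]
  rw [hXb, hXa] at h2
  have h3 : X b * φ g = 0 := by linear_combination h2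
  have h4 : φ g = 0 := X_mul_regular' h3
  have h5 := hcomp g
  rw [h4, map_zero] at h5
  exact h5.symm

private lemma X_sub_X_cancel {a b : Fin n} (hab : a ≠ b)
    {p q : MvPolynomial (Fin n) k} (h : (X b - X a) * p = (X b - X a) * q) :
    p = q := by
  have h0 : (X b - X a) * (p - q) = 0 := by linear_combination h
  exact sub_eq_zero.mp (X_sub_X_regular hab h0)

private lemma rename_demazure_spec (σ : Fin n → Fin n) (a b : Fin n)
    (f : MvPolynomial (Fin n) k) :
    rename σ f - rename (σ ∘ (Equiv.swap a b)) f
      = (X (σ b) - X (σ a)) * rename σ (demazure a b f) := by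
  have h := congrArg (rename σ) (demazure_spec a b f)
  simpa [map_sub, map_mul, rename_rename] using h

private lemma rename_swap_demazure (a b : Fin n) (hab : a ≠ b)
    (f : MvPolynomial (Fin n) k) :
    rename (Equiv.swap a b) (demazure a b f) = demazure a b f := by
  have h := rename_demazure_spec (⇑(Equiv.swap a b)) a b f
  have hid : (⇑(Equiv.swap a b) ∘ ⇑(Equiv.swap a b)) = (id : Fin n → Fin n) := by
    funext m; simp
  rw [hid, rename_id, AlgHom.id_apply, Equiv.swap_apply_left, Equiv.swap_apply_right] at h
  have hs := demazure_spec a b f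
  apply X_sub_X_cancel hab
  linear_combination h + hs

private lemma demazure_braid_aux (a b c : Fin n) (hab : a ≠ b) (hbc : b ≠ c)
    (hac : a ≠ c) (f : MvPolynomial (Fin n) k) :
    demazure a b (demazure b c (demazure a b f))
      = demazure b c (demazure a b (demazure b c f)) := by
  classical
  set u := demazure a b f with hu_def
  set v := demazure b c u with hv_def
  set L := demazure a b v with hL_def
  set u' := demazure b c f with hu'_def
  set v' := demazure a b u' with hv'_def
  set R := demazure b c v' with hR_def
  -- basic specs
  have hu : f - rename (⇑(Equiv.swap a b)) f = (X b - X a) * u := demazure_spec a b f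
  have hv : u - rename (⇑(Equiv.swap b c)) u = (X c - X b) * v := demazure_spec b c u
  have hL : v - rename (⇑(Equiv.swap a b)) v = (X b - X a) * L := demazure_spec a b v
  have hu' : f - rename (⇑(Equiv.swap b c)) f = (X c - X b) * u' := demazure_spec b c f
  have hv' : u' - rename (⇑(Equiv.swap a b)) u' = (X b - X a) * v' := demazure_spec a b u'
  have hR : v' - rename (⇑(Equiv.swap b c)) v' = (X c - X b) * R := demazure_spec b c v'
  -- swap application facts
  have sbc_a : Equiv.swap b c a = a := Equiv.swap_apply_of_ne_of_ne hab hac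
  have sbc_b : Equiv.swap b c b = c := Equiv.swap_apply_left b c
  have sbc_c : Equiv.swap b c c = b := Equiv.swap_apply_right b c
  have sab_a : Equiv.swap a b a = b := Equiv.swap_apply_left a b
  have sab_b : Equiv.swap a b b = a := Equiv.swap_apply_right a b
  have sab_c : Equiv.swap a b c = c :=
    Equiv.swap_apply_of_ne_of_ne hac.symm hbc.symm
  -- renamed specs
  have h3 := rename_demazure_spec (⇑(Equiv.swap a b)) b c u
  rw [show (⇑(Equiv.swap a b)) c = c from sab_c,
      show (⇑(Equiv.swap a b)) b = a from sab_b] at h3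
  have h7 : rename (⇑(Equiv.swap a b)) u = u := rename_swap_demazure a b hab f
  have h5 := rename_demazure_spec (⇑(Equiv.swap b c)) a b f
  rw [show (⇑(Equiv.swap b c)) b = c from sbc_b,
      show (⇑(Equiv.swap b c)) a = a from sbc_a] at h5
  have h6 := rename_demazure_spec (⇑(Equiv.swap a b) ∘ ⇑(Equiv.swap b c)) a b f
  rw [show (⇑(Equiv.swap a b) ∘ ⇑(Equiv.swap b c)) b = c by
        simp [Function.comp, sbc_b, sab_c],
      show (⇑(Equiv.swap a b) ∘ ⇑(Equiv.swap b c)) a = b by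
        simp [Function.comp, sbc_a, sab_a]] at h6
  have h3' := rename_demazure_spec (⇑(Equiv.swap b c)) a b u'
  rw [show (⇑(Equiv.swap b c)) b = c from sbc_b,
      show (⇑(Equiv.swap b c)) a = a from sbc_a] at h3'
  have h7' : rename (⇑(Equiv.swap b c)) u' = u' := rename_swap_demazure b c hbc f
  have h5' := rename_demazure_spec (⇑(Equiv.swap a b)) b c f
  rw [show (⇑(Equiv.swap a b)) c = c from sab_c,
      show (⇑(Equiv.swap a b)) b = a from sab_b] at h5'
  have h6' := rename_demazure_spec (⇑(Equiv.swap b c) ∘ ⇑(Equiv.swap a b)) b c f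
  rw [show (⇑(Equiv.swap b c) ∘ ⇑(Equiv.swap a b)) c = b by
        simp [Function.comp, sab_c, sbc_c],
      show (⇑(Equiv.swap b c) ∘ ⇑(Equiv.swap a b)) b = a by
        simp [Function.comp, sab_b, sbc_a]] at h6'
  -- braid relation for the swaps
  have hbraid : ((⇑(Equiv.swap a b) ∘ ⇑(Equiv.swap b c)) ∘ ⇑(Equiv.swap a b))
      = ((⇑(Equiv.swap b c) ∘ ⇑(Equiv.swap a b)) ∘ ⇑(Equiv.swap b c)) := by
    funext m
    by_cases h1 : m = a
    · subst h1; simp [Function.comp, sab_a, sbc_b, sab_c, sbc_a]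
    by_cases h2 : m = b
    · subst h2; simp [Function.comp, sab_b, sbc_a, sab_a, sbc_c, sab_c, sbc_b]
    by_cases h3 : m = c
    · subst h3; simp [Function.comp, sab_c, sbc_c, sab_b, sbc_a, sab_a]
    · have e1 : Equiv.swap a b m = m :=
        Equiv.swap_apply_of_ne_of_ne h1 h2
      have e2 : Equiv.swap b c m = m :=
        Equiv.swap_apply_of_ne_of_ne h2 h3
      simp [Function.comp, e1, e2]
  have hsts : rename ((⇑(Equiv.swap a b) ∘ ⇑(Equiv.swap b c)) ∘ ⇑(Equiv.swap a b)) f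
      = rename ((⇑(Equiv.swap b c) ∘ ⇑(Equiv.swap a b)) ∘ ⇑(Equiv.swap b c)) f := by
    rw [hbraid]
  -- key identities
  have k1 : (X b - X a) * ((X c - X b) * ((X c - X a) * ((X b - X a) * L)))
      = (X b - X a) * (f - rename (⇑(Equiv.swap a b)) f - rename (⇑(Equiv.swap b c)) f
          + rename (⇑(Equiv.swap b c) ∘ ⇑(Equiv.swap a b)) f
          + rename (⇑(Equiv.swap a b) ∘ ⇑(Equiv.swap b c)) f
          - rename ((⇑(Equiv.swap a b) ∘ ⇑(Equiv.swap b c)) ∘ ⇑(Equiv.swap a b)) f) := by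
    linear_combination (-((X b - X a) * (X c - X b) * (X c - X a))) * hL
      - ((X b - X a) * (X c - X a)) * hv
      + ((X b - X a) * (X c - X b)) * h3
      - ((X b - X a) * (X c - X b)) * h7
      - (X b - X a) * hu
      + (X b - X a) * h5
      - (X b - X a) * h6
  have c1 := X_sub_X_cancel hab k1
  have k2 : (X c - X b) * ((X b - X a) * ((X c - X a) * ((X c - X b) * R)))
      = (X c - X b) * (f - rename (⇑(Equiv.swap b c)) f - rename (⇑(Equiv.swap a b)) f
          + rename (⇑(Equiv.swap a b) ∘ ⇑(Equiv.swap b c)) f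
          + rename (⇑(Equiv.swap b c) ∘ ⇑(Equiv.swap a b)) f
          - rename ((⇑(Equiv.swap b c) ∘ ⇑(Equiv.swap a b)) ∘ ⇑(Equiv.swap b c)) f) := by
    linear_combination (-((X c - X b) * (X b - X a) * (X c - X a))) * hR
      - ((X c - X b) * (X c - X a)) * hv'
      + ((X c - X b) * (X b - X a)) * h3'
      - ((X c - X b) * (X b - X a)) * h7'
      - (X c - X b) * hu'
      + (X c - X b) * h5'
      - (X c - X b) * h6'
  have c2 := X_sub_X_cancel hbc k2
  have e1 : (X b - X a) * ((X c - X b) * ((X c - X a) * L))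
      = (X b - X a) * ((X c - X b) * ((X c - X a) * R)) := by
    linear_combination c1 - c2 - hsts
  have e2 := X_sub_X_cancel hab e1
  have e3 : (X c - X b) * ((X c - X a) * L) = (X c - X b) * ((X c - X a) * R) := by
    linear_combination e2
  have e4 := X_sub_X_cancel hbc e3
  have e5 : (X c - X a) * L = (X c - X a) * R := by linear_combination e4
  exact X_sub_X_cancel hac e5

/-- The Demazure operators satisfy the braid relation
`∂_i ∂_{i+1} ∂_i = ∂_{i+1} ∂_i ∂_{i+1}` on `R = k[x_1, …, x_n]`. -/
theorem demazure_braid {k : Type*} [CommRing k] {n : ℕ} (i : ℕ) (hi : i + 2 < n)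
    (f : MvPolynomial (Fin n) k) :
    demazure (⟨i, by omega⟩ : Fin n) ⟨i + 1, by omega⟩
      (demazure (⟨i + 1, by omega⟩ : Fin n) ⟨i + 2, hi⟩
        (demazure (⟨i, by omega⟩ : Fin n) ⟨i + 1, by omega⟩ f)) =
    demazure (⟨i + 1, by omega⟩ : Fin n) ⟨i + 2, hi⟩
      (demazure (⟨i, by omega⟩ : Fin n) ⟨i + 1, by omega⟩
        (demazure (⟨i + 1, by omega⟩ : Fin n) ⟨i + 2, hi⟩ f)) := by
  exact demazure_braid_aux _ _ _
    (by simp only [ne_eq, Fin.mk.injEq]; omega)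
    (by simp only [ne_eq, Fin.mk.injEq]; omega)
    (by simp only [ne_eq, Fin.mk.injEq]; omega) f
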